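/- Let p be a prime, and let k_1, k_2 be uniformly distributed and independent on Z_p. For any messages a ≠ b in Z_p^{≤l} (nonempty tuples of length at most l) and any tags t_0, t_1 ∈ Z_p, Pr[g(b,k_1,k_2) = t_1 | g(a,k_1,k_2) = t_0] ≤ (l+1)/p, where g(m,k_1,k_2) = k_1^{ν+1} + m_1 k_1^ν + ... + m_ν k_1 + k_2 for m of length ν. -/

import Mathlib

def macG {p : ℕ} (m : List (ZMod p)) (k₁ k₂ : ZMod p) : ZMod p :=
  k₁ ^ (m.length + 1) + (∑ i : Fin m.length, m.get i * k₁ ^ (m.length - i.val)) + k₂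

open Polynomial

noncomputable def macF {p : ℕ} (m : List (ZMod p)) : Polynomial (ZMod p) :=
  X ^ (m.length + 1) + ∑ i : Fin m.length, C (m.get i) * X ^ (m.length - i.val)

lemma macF_eval {p : ℕ} (m : List (ZMod p)) (x : ZMod p) :
    (macF m).eval x = x ^ (m.length + 1) + ∑ i : Fin m.length, m.get i * x ^ (m.length - i.val) := by
  simp [macF, Polynomial.eval_finset_sum]

lemma macG_eq {p : ℕ} (m : List (ZMod p)) (k₁ k₂ : ZMod p) :
    macG m k₁ k₂ = (macF m).eval k₁ + k₂ := by
  rw [macF_eval]; rfl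

lemma macF_coeff {p : ℕ} (m : List (ZMod p)) (k : ℕ) :
    (macF m).coeff k = (if k = m.length + 1 then 1 else 0) +
      ∑ i : Fin m.length, if k = m.length - i.val then m.get i else 0 := by
  simp [macF, Polynomial.finset_sum_coeff, Polynomial.coeff_X_pow, Polynomial.coeff_C_mul,
    mul_ite, mul_one, mul_zero]

lemma macF_coeff_zero {p : ℕ} (m : List (ZMod p)) : (macF m).coeff 0 = 0 := by
  rw [macF_coeff, if_neg (by omega), Finset.sum_eq_zero, add_zero]
  intro i _
  rw [if_neg (by omega)]

lemma macF_natDegree_le {p : ℕ} [Fact p.Prime] (m : List (ZMod p)) :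
    (macF m).natDegree ≤ m.length + 1 := by
  apply le_trans (Polynomial.natDegree_add_le _ _)
  rw [max_le_iff]
  refine ⟨le_of_eq (Polynomial.natDegree_X_pow _), ?_⟩
  apply Polynomial.natDegree_sum_le_of_forall_le
  intro i _
  apply le_trans (Polynomial.natDegree_C_mul_le _ _)
  rw [Polynomial.natDegree_X_pow]
  omega

lemma macF_injective {p : ℕ} [Fact p.Prime] (a b : List (ZMod p)) (hab : a ≠ b) :
    macF a ≠ macF b := by
  intro h
  apply hab
  have hdeg : ∀ m : List (ZMod p), (macF m).coeff (m.length + 1) = 1 := by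
    intro m
    rw [macF_coeff, if_pos rfl]
    rw [Finset.sum_eq_zero, add_zero]
    intro i _
    rw [if_neg (by omega)]
  have hlen : a.length = b.length := by
    by_contra hne
    rcases Nat.lt_or_ge a.length b.length with hlt | hge
    · have h1 : (macF a).coeff (b.length + 1) = 0 := by
        rw [macF_coeff, if_neg (by omega), Finset.sum_eq_zero, add_zero]
        intro i _; rw [if_neg (by omega)]
      rw [h, hdeg b] at h1
      exact one_ne_zero h1
    · have hlt : b.length < a.length := by omega
      have h1 : (macF b).coeff (a.length + 1) = 0 := by
        rw [macF_coeff, if_neg (by omega), Finset.sum_eq_zero, add_zero]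
        intro i _; rw [if_neg (by omega)]
      rw [← h, hdeg a] at h1
      exact one_ne_zero h1
  apply List.ext_get hlen
  intro n h1 h2
  have hc : ∀ (m : List (ZMod p)) (i : Fin m.length),
      (macF m).coeff (m.length - i.val) = m.get i := by
    intro m i
    rw [macF_coeff, if_neg (by omega)]
    rw [Finset.sum_eq_single i]
    · rw [if_pos rfl, zero_add]
    · intro j _ hj
      rw [if_neg]
      intro hEq
      exact hj (Fin.ext (by omega))
    · intro hi; exact absurd (Finset.mem_univ i) hi
  have e1 := hc a ⟨n, h1⟩
  have e2 := hc b ⟨n, h2⟩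
  simp only at e1 e2
  rw [← e1, ← e2, h, hlen]

/-- For uniform independent keys `k₁, k₂` on `Z_p`, distinct
nonempty messages `a ≠ b` of length at most `l` and any tags `t₀, t₁`, the
conditional probability `Pr[g(b,k₁,k₂) = t₁ | g(a,k₁,k₂) = t₀] ≤ (l+1)/p`.
With uniform keys this conditional probability is the ratio of the number of
key pairs satisfying both equations to the number satisfying the condition. -/
theorem stmt_12 (p : ℕ) (hp : p.Prime) [Fact p.Prime] (l : ℕ)
    (a b : List (ZMod p)) (ha : a ≠ []) (hb : b ≠ [])
    (hal : a.length ≤ l) (hbl : b.length ≤ l) (hab : a ≠ b)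
    (t₀ t₁ : ZMod p) :
    (((Finset.univ.filter fun k : ZMod p × ZMod p =>
          macG b k.1 k.2 = t₁ ∧ macG a k.1 k.2 = t₀)).card : ℝ)
        / ((Finset.univ.filter fun k : ZMod p × ZMod p =>
          macG a k.1 k.2 = t₀)).card
      ≤ (l + 1) / p := by
  have hp0 : 0 < p := hp.pos
  -- denominator card = p
  have hden : ((Finset.univ.filter fun k : ZMod p × ZMod p =>
      macG a k.1 k.2 = t₀)).card = p := by
    have himg : (Finset.univ.filter fun k : ZMod p × ZMod p => macG a k.1 k.2 = t₀)
        = Finset.univ.image (fun x : ZMod p => (x, t₀ - (macF a).eval x)) := by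
      ext ⟨k1, k2⟩
      simp only [Finset.mem_filter, Finset.mem_image, Finset.mem_univ, true_and, macG_eq,
        Prod.mk.injEq]
      constructor
      · intro h
        exact ⟨k1, rfl, by linear_combination -h⟩
      · rintro ⟨x, rfl, rfl⟩
        ring
    rw [himg, Finset.card_image_of_injective _ (fun x y h => congrArg Prod.fst h),
      Finset.card_univ, ZMod.card]
  -- the difference polynomial
  set Q : Polynomial (ZMod p) := macF b - macF a - C (t₁ - t₀) with hQ
  have hQne : Q ≠ 0 := by
    intro h
    have h0 : t₁ - t₀ = 0 := by
      have := congrArg (fun q => Polynomial.coeff q 0) h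
      simp only [hQ, Polynomial.coeff_sub, macF_coeff_zero, Polynomial.coeff_C_zero,
        Polynomial.coeff_zero] at this
      linear_combination -this
    rw [hQ, h0, map_zero, sub_zero, sub_eq_zero] at h
    exact macF_injective b a (Ne.symm hab) h
  have hQdeg : Q.natDegree ≤ l + 1 := by
    apply le_trans (Polynomial.natDegree_sub_le _ _)
    rw [max_le_iff]
    constructor
    · apply le_trans (Polynomial.natDegree_sub_le _ _)
      rw [max_le_iff]
      exact ⟨le_trans (macF_natDegree_le b) (by omega),
        le_trans (macF_natDegree_le a) (by omega)⟩
    · exact le_trans (Polynomial.natDegree_C _).le (by omega)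
  -- numerator bound
  have hnum : ((Finset.univ.filter fun k : ZMod p × ZMod p =>
      macG b k.1 k.2 = t₁ ∧ macG a k.1 k.2 = t₀)).card ≤ l + 1 := by
    have hsub : ((Finset.univ.filter fun k : ZMod p × ZMod p =>
        macG b k.1 k.2 = t₁ ∧ macG a k.1 k.2 = t₀)).card ≤ Q.roots.toFinset.card := by
      apply Finset.card_le_card_of_injOn (fun k => k.1)
      · intro k hk
        simp only [Finset.mem_coe, Finset.mem_filter, Finset.mem_univ, true_and, macG_eq] at hk
        rw [Finset.mem_coe, Multiset.mem_toFinset, Polynomial.mem_roots hQne]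
        simp only [Polynomial.IsRoot, hQ, Polynomial.eval_sub, Polynomial.eval_C]
        linear_combination hk.1 - hk.2
      · intro k hk k' hk' he
        simp only [Finset.coe_filter, Set.mem_setOf_eq, macG_eq] at hk hk'
        obtain ⟨-, hb1, ha1⟩ := hk
        obtain ⟨-, hb2, ha2⟩ := hk'
        simp only at he
        rw [he] at ha1
        exact Prod.ext he (by linear_combination ha1 - ha2)
    calc _ ≤ Q.roots.toFinset.card := hsub
      _ ≤ Multiset.card Q.roots := Q.roots.toFinset_card_le
      _ ≤ Q.natDegree := Q.card_roots'
      _ ≤ l + 1 := hQdeg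
  rw [hden]
  gcongr
  exact_mod_cast hnum
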